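/- Consider the population protocol with states Λ = {x, a, b, y, q} whose only non-null transitions are a,x → b,y and b,x → a,q. For m ∈ ℕ and k ≥ 1, let i be the configuration with i(x) = m, i(a) = k, and all other counts 0. Then: (1) from every configuration reachable from i, a configuration with count of x equal to 0 is reachable; and (2) every configuration o reachable from i with o(x) = 0 is stable (with respect to output state y) and satisfies ⌊m/2⌋ ≤ o(y) ≤ ⌊m/2⌋ + k. -/
import Mathlib


/-! Basic definitions for (leaderless) population protocols:
configurations, transitions, paths, reachability, bottlenecks, stability. -/

namespace PP

variable {Λ : Type*}

open Classical in
/-- The configuration consisting of a single agent in state `s`. -/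
noncomputable def single (s : Λ) : Λ → ℕ := fun t => if t = s then 1 else 0

/-- The configuration consisting of the two agents of the ordered pair `r`. -/
noncomputable def pairConf (r : Λ × Λ) : Λ → ℕ := single r.1 + single r.2

/-- The transition with input pair `r` is applicable to configuration `c`. -/
def Applicable (c : Λ → ℕ) (r : Λ × Λ) : Prop := pairConf r ≤ c

/-- The result of applying the transition with inputs `r` (and outputs `δ r`) to `c`. -/
noncomputable def applyTx (δ : Λ × Λ → Λ × Λ) (r : Λ × Λ) (c : Λ → ℕ) : Λ → ℕ :=
  c - pairConf r + pairConf (δ r)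

/-- `PathFrom δ c p c'`: executing the transition sequence `p` (each transition given
by its ordered pair of input states) from `c` is valid and ends in `c'`. -/
inductive PathFrom (δ : Λ × Λ → Λ × Λ) : (Λ → ℕ) → List (Λ × Λ) → (Λ → ℕ) → Prop
  | nil (c : Λ → ℕ) : PathFrom δ c [] c
  | cons {c c' : Λ → ℕ} (r : Λ × Λ) {p : List (Λ × Λ)} :
      Applicable c r → PathFrom δ (applyTx δ r c) p c' → PathFrom δ c (r :: p) c'

/-- `Reach δ c c'` means `c ⟹ c'`: some finite path leads from `c` to `c'`. -/
def Reach (δ : Λ × Λ → Λ × Λ) (c c' : Λ → ℕ) : Prop := ∃ p, PathFrom δ c p c'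

/-- `NoBottleneck δ b c p`: no transition of path `p` executed from `c` is a
`b`-bottleneck for the configuration to which it is applied. -/
inductive NoBottleneck (δ : Λ × Λ → Λ × Λ) (b : ℕ) : (Λ → ℕ) → List (Λ × Λ) → Prop
  | nil (c : Λ → ℕ) : NoBottleneck δ b c []
  | cons {c : Λ → ℕ} (r : Λ × Λ) {p : List (Λ × Λ)} :
      ¬(c r.1 ≤ b ∧ c r.2 ≤ b) → NoBottleneck δ b (applyTx δ r c) p →
      NoBottleneck δ b c (r :: p)

/-- A configuration is stable w.r.t. output state `y` if the count of `y` can never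
change again. -/
def Stable (δ : Λ × Λ → Λ × Λ) (y : Λ) (o : Λ → ℕ) : Prop :=
  ∀ o', Reach δ o o' → o' y = o y

/-- The transition function is symmetric. -/
def Symmetric (δ : Λ × Λ → Λ × Λ) : Prop :=
  ∀ r1 r2 : Λ, δ (r2, r1) = ((δ (r1, r2)).2, (δ (r1, r2)).1)

end PP

/-- The five states of the division-by-two protocol. -/
inductive DivSt : Type
  | x | a | b | y | q
  deriving DecidableEq

/-- The (symmetric) transition function whose only non-null transitions are
`a,x → b,y` and `b,x → a,q`. -/
def divδ : DivSt × DivSt → DivSt × DivSt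
  | (DivSt.a, DivSt.x) => (DivSt.b, DivSt.y)
  | (DivSt.x, DivSt.a) => (DivSt.y, DivSt.b)
  | (DivSt.b, DivSt.x) => (DivSt.a, DivSt.q)
  | (DivSt.x, DivSt.b) => (DivSt.q, DivSt.a)
  | r => r

namespace Div16

/-- The invariant preserved by the protocol. -/
def Inv (m k : ℕ) (c : DivSt → ℕ) : Prop :=
  c DivSt.a + c DivSt.b = k ∧ c DivSt.x + c DivSt.y + c DivSt.q = m ∧
  c DivSt.y = c DivSt.q + c DivSt.b

lemma applyTx_apply (r : DivSt × DivSt) (c : DivSt → ℕ) (t : DivSt) :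
    PP.applyTx divδ r c t = c t - PP.pairConf r t + PP.pairConf (divδ r) t := rfl

lemma null_applyTx {r : DivSt × DivSt} {c : DivSt → ℕ} (h : PP.Applicable c r)
    (hr : divδ r = r) : PP.applyTx divδ r c = c := by
  funext t
  have ht : PP.pairConf r t ≤ c t := h t
  rw [applyTx_apply, hr]
  omega

lemma step_inv {m k : ℕ} {c : DivSt → ℕ} {r : DivSt × DivSt}
    (h : PP.Applicable c r) (hI : Inv m k c) : Inv m k (PP.applyTx divδ r c) := by
  obtain ⟨h1, h2, h3⟩ := hI
  have hhx : PP.pairConf r DivSt.x ≤ c DivSt.x := h DivSt.x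
  have hha : PP.pairConf r DivSt.a ≤ c DivSt.a := h DivSt.a
  have hhb : PP.pairConf r DivSt.b ≤ c DivSt.b := h DivSt.b
  have hhy : PP.pairConf r DivSt.y ≤ c DivSt.y := h DivSt.y
  have hhq : PP.pairConf r DivSt.q ≤ c DivSt.q := h DivSt.q
  obtain ⟨r1, r2⟩ := r
  unfold Inv
  cases r1 <;> cases r2 <;>
    simp only [applyTx_apply, PP.pairConf, PP.single, Pi.add_apply, divδ, reduceCtorEq, ite_true, ite_false,
      reduceCtorEq, ite_true, ite_false, if_true, if_false, reduceIte] at hhx hha hhb hhy hhq ⊢ <;> omega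

lemma inv_path {m k : ℕ} {p : List (DivSt × DivSt)} :
    ∀ {c c' : DivSt → ℕ}, PP.PathFrom divδ c p c' → Inv m k c → Inv m k c' := by
  induction p with
  | nil => intro c c' hp hI; cases hp; exact hI
  | cons r p ih =>
    intro c c' hp hI
    cases hp with
    | cons _ happ hp => exact ih hp (step_inv happ hI)

lemma frozen {p : List (DivSt × DivSt)} :
    ∀ {c c' : DivSt → ℕ}, PP.PathFrom divδ c p c' → c DivSt.x = 0 → c' = c := by
  induction p with
  | nil => intro c c' hp _; cases hp; rfl
  | cons r p ih =>
    intro c c' hp h0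
    cases hp with
    | cons _ happ hp =>
      have hxr := happ DivSt.x
      have hr : divδ r = r := by
        obtain ⟨r1, r2⟩ := r
        cases r1 <;> cases r2 <;> first
          | rfl
          | (exfalso
             simp only [PP.pairConf, PP.single, Pi.add_apply, if_true, if_false,
               reduceIte] at hxr
             omega)
      rw [null_applyTx happ hr] at hp
      exact ih hp h0

lemma reduce {k : ℕ} (hk : 1 ≤ k) :
    ∀ (n : ℕ) (c : DivSt → ℕ), c DivSt.a + c DivSt.b = k → c DivSt.x = n →
      ∃ c' : DivSt → ℕ, PP.Reach divδ c c' ∧ c' DivSt.x = 0 := by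
  intro n
  induction n with
  | zero => intro c _ h0; exact ⟨c, ⟨[], PP.PathFrom.nil c⟩, h0⟩
  | succ n ih =>
    intro c hab hx
    by_cases hca : 1 ≤ c DivSt.a
    · have happ : PP.Applicable c (DivSt.a, DivSt.x) := by
        intro t
        cases t <;>
          simp only [PP.pairConf, PP.single, Pi.add_apply, reduceCtorEq, ite_true,
            ite_false] <;> omega
      obtain ⟨c', ⟨p, hp⟩, hc'⟩ := ih (PP.applyTx divδ (DivSt.a, DivSt.x) c)
        (by simp only [applyTx_apply, PP.pairConf, PP.single, Pi.add_apply, divδ, reduceCtorEq, ite_true, ite_false,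
              reduceCtorEq, ite_true, ite_false, if_true, if_false, reduceIte]; omega)
        (by simp only [applyTx_apply, PP.pairConf, PP.single, Pi.add_apply, divδ, reduceCtorEq, ite_true, ite_false,
              reduceCtorEq, ite_true, ite_false, if_true, if_false, reduceIte]; omega)
      exact ⟨c', ⟨_ :: p, PP.PathFrom.cons _ happ hp⟩, hc'⟩
    · have hcb : 1 ≤ c DivSt.b := by omega
      have happ : PP.Applicable c (DivSt.b, DivSt.x) := by
        intro t
        cases t <;>
          simp only [PP.pairConf, PP.single, Pi.add_apply, reduceCtorEq, ite_true,
            ite_false] <;> omega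
      obtain ⟨c', ⟨p, hp⟩, hc'⟩ := ih (PP.applyTx divδ (DivSt.b, DivSt.x) c)
        (by simp only [applyTx_apply, PP.pairConf, PP.single, Pi.add_apply, divδ, reduceCtorEq, ite_true, ite_false,
              reduceCtorEq, ite_true, ite_false, if_true, if_false, reduceIte]; omega)
        (by simp only [applyTx_apply, PP.pairConf, PP.single, Pi.add_apply, divδ, reduceCtorEq, ite_true, ite_false,
              reduceCtorEq, ite_true, ite_false, if_true, if_false, reduceIte]; omega)
      exact ⟨c', ⟨_ :: p, PP.PathFrom.cons _ happ hp⟩, hc'⟩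

end Div16

/-- For the protocol with transitions `a,x → b,y` and `b,x → a,q`, starting from
the configuration `i` with `i(x) = m`, `i(a) = k ≥ 1` and all other counts `0`:
(1) from every configuration reachable from `i`, a configuration with no `x` is
reachable; and (2) every configuration `o` reachable from `i` with `o(x) = 0` is
stable (w.r.t. output state `y`) and satisfies `⌊m/2⌋ ≤ o(y) ≤ ⌊m/2⌋ + k`. -/
theorem stmt16 (m k : ℕ) (hk : 1 ≤ k) (init : DivSt → ℕ)
    (hx : init DivSt.x = m) (ha : init DivSt.a = k)
    (hb : init DivSt.b = 0) (hy : init DivSt.y = 0) (hq : init DivSt.q = 0) :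
    (∀ c : DivSt → ℕ, PP.Reach divδ init c →
      ∃ c' : DivSt → ℕ, PP.Reach divδ c c' ∧ c' DivSt.x = 0) ∧
    (∀ o : DivSt → ℕ, PP.Reach divδ init o → o DivSt.x = 0 →
      PP.Stable divδ DivSt.y o ∧ m / 2 ≤ o DivSt.y ∧ o DivSt.y ≤ m / 2 + k) := by
  have hInv : Div16.Inv m k init := by
    refine ⟨?_, ?_, ?_⟩ <;> omega
  constructor
  · intro c ⟨p, hp⟩
    have hI : Div16.Inv m k c := Div16.inv_path hp hInv
    exact Div16.reduce hk (c DivSt.x) c hI.1 rfl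
  · intro o ⟨p, hp⟩ h0
    have hI : Div16.Inv m k o := Div16.inv_path hp hInv
    obtain ⟨h1, h2, h3⟩ := hI
    refine ⟨?_, ?_, ?_⟩
    · intro o' ⟨p', hp'⟩
      rw [Div16.frozen hp' h0]
    · omega
    · omega
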